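/- arXiv:2502.02477 — 2 statements merged into one kernel-verified Lean document; each statement's English description precedes it below -/
import Mathlib

section
/- Every bipartite graph G(U,W,E) with |U|=|W|=n and |E|=m ≥ n^{2-δ} (for a constant 0 ≤ δ ≤ 1) contains a complete bipartite subgraph (a δ-clique) whose left partition has at least ⌈n^{1-δ}⌉ vertices and whose right partition has k(n,m,δ) = ⌊δ log n / log(2n²/m)⌋ vertices. -/
open Finset

-- auxiliary: y ≤ 2^y for 0 ≤ y
lemma aux_le_rpow' {y : ℝ} (hy : 0 ≤ y) : y ≤ (2:ℝ) ^ y := by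
  rcases le_total y 1 with h | h
  · exact h.trans (by
      calc (1:ℝ) = (2:ℝ) ^ (0:ℝ) := by norm_num
      _ ≤ (2:ℝ) ^ y := Real.rpow_le_rpow_of_exponent_le one_le_two hy)
  · have := one_add_mul_self_le_rpow_one_add (by norm_num : (-1:ℝ) ≤ 1) h
    norm_num at this
    calc y ≤ 1 + y := by linarith
    _ ≤ (2:ℝ) ^ y := this

-- auxiliary: double counting
lemma aux_double_count (n k : ℕ) (N : Fin n → Finset (Fin n)) :
    ∑ S ∈ (univ : Finset (Fin n)).powersetCard k,
      (univ.filter (fun u => S ⊆ N u)).card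
    = ∑ u : Fin n, ((N u).card).choose k := by
  have h1 : ∀ S : Finset (Fin n), (univ.filter (fun u => S ⊆ N u)).card
      = ∑ u : Fin n, if S ⊆ N u then 1 else 0 := by
    intro S; rw [Finset.card_filter]
  simp_rw [h1]
  rw [Finset.sum_comm]
  refine Finset.sum_congr rfl fun u _ => ?_
  rw [← Finset.card_filter]
  have h2 : ((univ : Finset (Fin n)).powersetCard k).filter (fun S => S ⊆ N u)
      = (N u).powersetCard k := by
    ext S
    simp only [Finset.mem_filter, Finset.mem_powersetCard, Finset.subset_univ, true_and]
    tauto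
  rw [h2, Finset.card_powersetCard]

set_option maxHeartbeats 2000000 in
/-- Every bipartite graph with `n` vertices on each side and `m ≥ n^(2-δ)` edges
contains a δ-clique: a complete bipartite subgraph with left partition of size at least
`⌈n^(1-δ)⌉` and right partition of size exactly `⌊δ log n / log (2n²/m)⌋` (logs base 2). -/
theorem stmt_0 (n : ℕ) (hn : 2 ≤ n) (E : Finset (Fin n × Fin n)) (δ : ℝ)
    (hδ0 : 0 ≤ δ) (hδ1 : δ ≤ 1) (m : ℕ) (hm : m = E.card)
    (hm0 : 0 < m)
    (hratio : 1 < 2 * (n : ℝ) ^ 2 / m)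
    (hmlb : (n : ℝ) ^ ((2 : ℝ) - δ) ≤ m) :
    ∃ U' W' : Finset (Fin n),
      (∀ u ∈ U', ∀ w ∈ W', (u, w) ∈ E) ∧
      ⌈(n : ℝ) ^ ((1 : ℝ) - δ)⌉₊ ≤ U'.card ∧
      W'.card = ⌊δ * Real.logb 2 n / Real.logb 2 (2 * (n : ℝ) ^ 2 / m)⌋₊ := by
  classical
  set L : ℝ := Real.logb 2 n with hLdef
  set t : ℝ := 2 * (n:ℝ) ^ 2 / m with htdef
  set x : ℝ := Real.logb 2 t with hxdef
  set k : ℕ := ⌊δ * L / x⌋₊ with hkdef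
  have hn0 : (0:ℝ) < n := by positivity
  have hn2 : (2:ℝ) ≤ n := by exact_mod_cast hn
  have hm0' : (0:ℝ) < m := by exact_mod_cast hm0
  have ht0 : (0:ℝ) < t := lt_trans one_pos hratio
  have hmn2 : m ≤ n ^ 2 := by
    rw [hm]
    calc E.card ≤ Fintype.card (Fin n × Fin n) := Finset.card_le_univ E
      _ = n ^ 2 := by simp [sq]
  have ht2 : (2:ℝ) ≤ t := by
    rw [htdef]
    rw [le_div_iff₀ hm0']
    have : (m:ℝ) ≤ (n:ℝ) ^ 2 := by exact_mod_cast hmn2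
    nlinarith
  have hx1 : (1:ℝ) ≤ x := by
    rw [hxdef]
    calc (1:ℝ) = Real.logb 2 2 := (Real.logb_self_eq_one one_lt_two).symm
      _ ≤ Real.logb 2 t := Real.logb_le_logb_of_le one_lt_two two_pos ht2
  have hx0 : (0:ℝ) < x := lt_of_lt_of_le one_pos hx1
  have hL1 : (1:ℝ) ≤ L := by
    rw [hLdef]
    calc (1:ℝ) = Real.logb 2 2 := (Real.logb_self_eq_one one_lt_two).symm
      _ ≤ Real.logb 2 (n:ℝ) := Real.logb_le_logb_of_le one_lt_two two_pos hn2
  have hL0 : (0:ℝ) ≤ L := le_trans zero_le_one hL1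
  have h2L : (2:ℝ) ^ L = n := Real.rpow_logb two_pos (by norm_num) hn0
  have h2x : (2:ℝ) ^ x = t := Real.rpow_logb two_pos (by norm_num) ht0
  have hkle : (k:ℝ) ≤ δ * L / x := Nat.floor_le (by positivity)
  have hkx : (k:ℝ) * x ≤ δ * L := by
    have := (le_div_iff₀ hx0).mp hkle
    linarith
  -- the case k = 0
  rcases Nat.eq_zero_or_pos k with hk0 | hk1
  · refine ⟨univ, ∅, by simp, ?_, by simp [hk0.symm]⟩
    rw [Finset.card_univ, Fintype.card_fin]
    refine Nat.ceil_le.mpr ?_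
    calc (n:ℝ) ^ ((1:ℝ) - δ) ≤ (n:ℝ) ^ (1:ℝ) :=
          Real.rpow_le_rpow_of_exponent_le (by linarith) (by linarith)
      _ = n := Real.rpow_one _
  -- main case : k ≥ 1
  set N : Fin n → Finset (Fin n) := fun u => univ.filter (fun w => (u, w) ∈ E) with hNdef
  set d : Fin n → ℕ := fun u => (N u).card with hddef
  have hdsum : ∑ u : Fin n, d u = m := by
    rw [hm]
    have h1 : E.card = ∑ u : Fin n, (E.filter (fun p => p.1 = u)).card :=
      Finset.card_eq_sum_card_fiberwise (fun p _ => Finset.mem_univ _)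
    rw [h1]
    refine (Finset.sum_congr rfl fun u _ => ?_).symm
    refine Finset.card_bij (fun p _ => p.2) ?_ ?_ ?_
    · intro p hp
      simp only [Finset.mem_filter, Finset.mem_univ, true_and] at hp ⊢
      simp only [N]
      simp only [Finset.mem_filter, Finset.mem_univ, true_and]
      rw [← hp.2]; exact hp.1
    · intro p hp q hq hpq
      simp only [Finset.mem_filter] at hp hq
      have : p.1 = q.1 := by rw [hp.2, hq.2]
      exact Prod.ext this hpq
    · intro w hw
      simp only [N, Finset.mem_filter, Finset.mem_univ, true_and] at hw
      exact ⟨(u, w), Finset.mem_filter.mpr ⟨hw, rfl⟩, rfl⟩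
  have hkn : k ≤ n := by
    have h1 : (k:ℝ) ≤ n := by
      refine hkle.trans ?_
      calc δ * L / x ≤ δ * L := div_le_self (by positivity) hx1
        _ ≤ L := by nlinarith
        _ ≤ n := by
          rw [hLdef]
          have h2 : (n:ℝ) < (2:ℝ) ^ (n:ℝ) := by
            rw [Real.rpow_natCast]
            exact_mod_cast (Nat.lt_two_pow_self (n := n))
          calc Real.logb 2 (n:ℝ) ≤ Real.logb 2 ((2:ℝ) ^ (n:ℝ)) :=
                Real.logb_le_logb_of_le one_lt_two hn0 h2.le
            _ = n := by rw [Real.logb_rpow two_pos (by norm_num)]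
    exact_mod_cast h1
  have hchoosepos : (0:ℝ) < (n.choose k : ℝ) := by
    exact_mod_cast Nat.choose_pos hkn
  -- k - 1 ≤ m / (2n)
  have hnt : (n:ℝ) / t = m / (2 * n) := by
    rw [htdef]; field_simp
  have hkm : (n:ℝ) * ((k:ℝ) - 1) ≤ m / 2 := by
    have hmain : δ * L / x ≤ m / (2 * n) + 1 := by
      rcases le_total L x with h | h
      · calc δ * L / x ≤ 1 * L / x := by
              apply div_le_div_of_nonneg_right _ hx0.le
              · nlinarith
          _ ≤ 1 := by rw [one_mul]; rw [div_le_one hx0]; exact h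
          _ ≤ m / (2*n) + 1 := by
              have : (0:ℝ) ≤ m / (2*n) := by positivity
              linarith
      · have h1 : δ * L / x ≤ L / x := by
          apply div_le_div_of_nonneg_right _ hx0.le
          nlinarith
        have h2 : L / x = (L - x) / x + 1 := by field_simp; ring
        have h3 : (L - x) / x ≤ L - x := by
          apply div_le_self (by linarith) hx1
        have h4 : L - x ≤ (2:ℝ) ^ (L - x) := aux_le_rpow' (by linarith)
        have h5 : (2:ℝ) ^ (L - x) = (n:ℝ) / t := by
          rw [Real.rpow_sub two_pos, h2L, h2x]
        rw [h5, hnt] at h4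
        linarith
    have h6 : (k:ℝ) ≤ m / (2*n) + 1 := hkle.trans hmain
    have h7 : (k:ℝ) - 1 ≤ m / (2*n) := by linarith
    calc (n:ℝ) * ((k:ℝ) - 1) ≤ (n:ℝ) * (m / (2*n)) := by
          apply mul_le_mul_of_nonneg_left h7 hn0.le
      _ = m / 2 := by field_simp
  -- key power inequality
  have htk : t ^ k ≤ (n:ℝ) ^ δ := by
    calc t ^ k = ((2:ℝ) ^ x) ^ k := by rw [h2x]
      _ = (2:ℝ) ^ (x * k) := by
          rw [← Real.rpow_natCast ((2:ℝ) ^ x) k, ← Real.rpow_mul (by norm_num)]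
      _ ≤ (2:ℝ) ^ (δ * L) := by
          apply Real.rpow_le_rpow_of_exponent_le one_le_two
          nlinarith [hkx]
      _ = ((2:ℝ) ^ L) ^ δ := by
          rw [← Real.rpow_mul (by norm_num)]; ring_nf
      _ = (n:ℝ) ^ δ := by rw [h2L]
  have hkey : (2:ℝ) ^ k * (n:ℝ) ^ (2 * k) ≤ (m:ℝ) ^ k * (n:ℝ) ^ δ := by
    have h1 : t ^ k * (m:ℝ) ^ k ≤ (n:ℝ) ^ δ * (m:ℝ) ^ k :=
      mul_le_mul_of_nonneg_right htk (by positivity)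
    have h2 : t ^ k * (m:ℝ) ^ k = (2:ℝ) ^ k * (n:ℝ) ^ (2 * k) := by
      rw [← mul_pow, htdef]
      rw [div_mul_cancel₀ _ (ne_of_gt hm0')]
      rw [mul_pow, ← pow_mul]
    linarith
  -- the averaged degree counting
  set a : Fin n → ℕ := fun u => d u + 1 - k with hadef
  set A : ℝ := ∑ u : Fin n, (a u : ℝ) with hAdef
  have hA2 : (m:ℝ) / 2 ≤ A := by
    have hpt : ∀ u : Fin n, (d u : ℝ) + 1 - k ≤ (a u : ℝ) := by
      intro u
      have : d u + 1 ≤ (d u + 1 - k) + k := by omega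
      have h2 : ((d u : ℝ) + 1) ≤ ((d u + 1 - k : ℕ) : ℝ) + k := by exact_mod_cast this
      simp only [a]
      linarith
    have hsum : (m:ℝ) + n - n * k ≤ A := by
      rw [hAdef]
      have h3 : ∑ u : Fin n, ((d u : ℝ) + 1 - k) ≤ ∑ u : Fin n, (a u : ℝ) :=
        Finset.sum_le_sum (fun u _ => hpt u)
      have h4 : ∑ u : Fin n, ((d u : ℝ) + 1 - k) = (m:ℝ) + n - n * k := by
        rw [Finset.sum_sub_distrib, Finset.sum_add_distrib]
        simp only [Finset.sum_const, Finset.card_univ, Fintype.card_fin, nsmul_eq_mul,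
          mul_one]
        have h5 : ∑ u : Fin n, (d u : ℝ) = m := by exact_mod_cast congrArg Nat.cast hdsum
        rw [h5]
      linarith
    have : (m:ℝ) / 2 ≤ (m:ℝ) + n - n * k := by nlinarith [hkm]
    linarith
  have hA0 : (0:ℝ) ≤ A := le_trans (by positivity) hA2
  -- Jensen / power mean
  have hjensen : A ^ k / (n:ℝ) ^ (k - 1) ≤ ∑ u : Fin n, (a u : ℝ) ^ k := by
    have := pow_sum_div_card_le_sum_pow (s := (univ : Finset (Fin n)))
      (f := fun u => (a u : ℝ)) (fun i _ => by positivity) (k - 1)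
    have hk' : (k - 1) + 1 = k := by omega
    rw [hk'] at this
    simpa [Finset.card_univ, Fintype.card_fin, hAdef] using this
  -- pointwise binomial bound
  have hptchoose : ∀ u : Fin n, (a u : ℝ) ^ k / (k.factorial : ℝ) ≤ ((d u).choose k : ℝ) := by
    intro u
    have := Nat.pow_le_choose (α := ℝ) k (d u)
    simpa [hadef] using this
  have hfactpos : (0:ℝ) < (k.factorial : ℝ) := by exact_mod_cast k.factorial_pos
  have hnk1pos : (0:ℝ) < (n:ℝ) ^ (k - 1) := by positivity
  -- main chain : n^(1-δ) * C(n,k) ≤ ∑ C(d u, k)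
  have hB : (n:ℝ) ^ ((1:ℝ) - δ) * (n.choose k : ℝ) ≤ ∑ u : Fin n, ((d u).choose k : ℝ) := by
    have hy0 : (0:ℝ) < (n:ℝ) ^ ((1:ℝ) - δ) := Real.rpow_pos_of_pos hn0 _
    have step1 : (n:ℝ) ^ ((1:ℝ) - δ) * (n.choose k : ℝ)
        ≤ (n:ℝ) ^ ((1:ℝ) - δ) * ((n:ℝ) ^ k / (k.factorial : ℝ)) :=
      mul_le_mul_of_nonneg_left (Nat.choose_le_pow_div k n) hy0.le
    have step2 : (n:ℝ) ^ ((1:ℝ) - δ) * ((n:ℝ) ^ k / (k.factorial : ℝ))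
        ≤ ((m:ℝ) / 2) ^ k / ((n:ℝ) ^ (k - 1) * (k.factorial : ℝ)) := by
      have hcore : (n:ℝ) ^ ((1:ℝ) - δ) * (n:ℝ) ^ k * (n:ℝ) ^ (k - 1) ≤ ((m:ℝ) / 2) ^ k := by
        have hrw : (n:ℝ) ^ ((1:ℝ) - δ) * (n:ℝ) ^ k * (n:ℝ) ^ (k - 1) * (n:ℝ) ^ δ
            = (n:ℝ) ^ (2 * k) := by
          have e1 : (n:ℝ) ^ ((1:ℝ) - δ) * (n:ℝ) ^ δ = (n:ℝ) := by
            rw [← Real.rpow_add hn0]; norm_num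
          have e2 : (n:ℝ) * ((n:ℝ) ^ k * (n:ℝ) ^ (k - 1)) = (n:ℝ) ^ (2 * k) := by
            rw [← pow_add, ← pow_succ']
            congr 1
            omega
          calc (n:ℝ) ^ ((1:ℝ) - δ) * (n:ℝ) ^ k * (n:ℝ) ^ (k - 1) * (n:ℝ) ^ δ
              = ((n:ℝ) ^ ((1:ℝ) - δ) * (n:ℝ) ^ δ) * ((n:ℝ) ^ k * (n:ℝ) ^ (k - 1)) := by
                ring
            _ = (n:ℝ) * ((n:ℝ) ^ k * (n:ℝ) ^ (k - 1)) := by rw [e1]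
            _ = (n:ℝ) ^ (2 * k) := e2
        have hd2 : ((m:ℝ) / 2) ^ k = (m:ℝ) ^ k / (2:ℝ) ^ k := div_pow _ _ _
        rw [hd2, le_div_iff₀ (by positivity)]
        have hnδ : (0:ℝ) < (n:ℝ) ^ δ := Real.rpow_pos_of_pos hn0 _
        rw [← mul_le_mul_iff_of_pos_right hnδ]
        calc (n:ℝ) ^ ((1:ℝ) - δ) * (n:ℝ) ^ k * (n:ℝ) ^ (k - 1) * (2:ℝ) ^ k * (n:ℝ) ^ δ
            = (2:ℝ) ^ k * ((n:ℝ) ^ ((1:ℝ) - δ) * (n:ℝ) ^ k * (n:ℝ) ^ (k - 1) * (n:ℝ) ^ δ) := by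
              ring
          _ = (2:ℝ) ^ k * (n:ℝ) ^ (2 * k) := by rw [hrw]
          _ ≤ (m:ℝ) ^ k * (n:ℝ) ^ δ := hkey
      have hre : (n:ℝ) ^ ((1:ℝ) - δ) * ((n:ℝ) ^ k / (k.factorial : ℝ))
          = ((n:ℝ) ^ ((1:ℝ) - δ) * (n:ℝ) ^ k) / (k.factorial : ℝ) := by ring
      rw [hre, div_le_div_iff₀ hfactpos (by positivity)]
      calc (n:ℝ) ^ ((1:ℝ) - δ) * (n:ℝ) ^ k * ((n:ℝ) ^ (k - 1) * (k.factorial : ℝ))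
          = ((n:ℝ) ^ ((1:ℝ) - δ) * (n:ℝ) ^ k * (n:ℝ) ^ (k - 1)) * (k.factorial : ℝ) := by
            ring
        _ ≤ ((m:ℝ) / 2) ^ k * (k.factorial : ℝ) :=
            mul_le_mul_of_nonneg_right hcore hfactpos.le
    have step3 : ((m:ℝ) / 2) ^ k / ((n:ℝ) ^ (k - 1) * (k.factorial : ℝ))
        ≤ A ^ k / ((n:ℝ) ^ (k - 1) * (k.factorial : ℝ)) := by
      apply div_le_div_of_nonneg_right _ (by positivity)
      exact pow_le_pow_left₀ (by positivity) hA2 k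
    have step4 : A ^ k / ((n:ℝ) ^ (k - 1) * (k.factorial : ℝ))
        ≤ (∑ u : Fin n, (a u : ℝ) ^ k) / (k.factorial : ℝ) := by
      rw [← div_div]
      exact div_le_div_of_nonneg_right hjensen hfactpos.le
    have step5 : (∑ u : Fin n, (a u : ℝ) ^ k) / (k.factorial : ℝ)
        ≤ ∑ u : Fin n, ((d u).choose k : ℝ) := by
      rw [Finset.sum_div]
      exact Finset.sum_le_sum (fun u _ => hptchoose u)
    linarith
  -- pigeonhole
  set c : ℕ := ⌈(n:ℝ) ^ ((1:ℝ) - δ)⌉₊ with hcdef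
  have hc1 : 1 ≤ c := Nat.one_le_ceil_iff.mpr (Real.rpow_pos_of_pos hn0 _)
  have hdc := aux_double_count n k N
  have hex : ∃ S ∈ (univ : Finset (Fin n)).powersetCard k,
      c ≤ (univ.filter (fun u => S ⊆ N u)).card := by
    by_contra hcon
    push_neg at hcon
    have hsle : ∑ S ∈ (univ : Finset (Fin n)).powersetCard k,
        (univ.filter (fun u => S ⊆ N u)).card
        ≤ ∑ S ∈ (univ : Finset (Fin n)).powersetCard k, (c - 1) :=
      Finset.sum_le_sum (fun S hS => by have := hcon S hS; omega)
    rw [Finset.sum_const, Finset.card_powersetCard, Finset.card_univ, Fintype.card_fin,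
      smul_eq_mul, hdc] at hsle
    have hcast : (∑ u : Fin n, ((d u).choose k : ℝ)) ≤ (n.choose k : ℝ) * ((c:ℝ) - 1) := by
      have h1 : ((∑ u : Fin n, (d u).choose k : ℕ) : ℝ) ≤ ((n.choose k * (c - 1) : ℕ) : ℝ) := by
        exact_mod_cast hsle
      push_cast [hc1] at h1
      linarith
    have hclt : ((c:ℝ) - 1) < (n:ℝ) ^ ((1:ℝ) - δ) := by
      have := Nat.ceil_lt_add_one (le_of_lt (Real.rpow_pos_of_pos hn0 ((1:ℝ) - δ)))
      rw [← hcdef] at this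
      linarith
    have : (n:ℝ) ^ ((1:ℝ) - δ) * (n.choose k : ℝ) ≤ (n.choose k : ℝ) * ((c:ℝ) - 1) :=
      le_trans hB hcast
    nlinarith
  obtain ⟨S, hSP, hSc⟩ := hex
  refine ⟨univ.filter (fun u => S ⊆ N u), S, ?_, hSc, ?_⟩
  · intro u hu w hw
    have hu' := (Finset.mem_filter.mp hu).2
    have hw' := hu' hw
    simp only [N, Finset.mem_filter, Finset.mem_univ, true_and] at hw'
    exact hw'
  · exact (Finset.mem_powersetCard.mp hSP).2
end

section
/- If a compression procedure on a bipartite graph processes edges in stages, where stage i removes at most 2m/2^i edges and for each removed edge adds at most (1/k_i + 1/n^{1−δ}) new edges with 1/(2k_i) ≤ 1/k + i/(δ log n), then the total number of edges added is O(m/k + m/log n + m/n^{1−δ}). -/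
set_option maxHeartbeats 1000000


/-- If a compression procedure processes edges in stages, where stage `i ≥ 1` adds
`added i` edges with `added i ≤ (1/k_i + 1/n^(1-δ)) · (2m/2^i)` (stage `i` removes at
most `2m/2^i` edges, each removed edge adding at most `1/k_i + 1/n^(1-δ)` new edges),
and `1/(2 k_i) ≤ 1/k + i/(δ log n)` with `k = ⌊δ log n / log (2n²/m)⌋ > 0`, then the
total number of added edges is `O(m/k + m/log n + m/n^(1-δ))`. -/
theorem stmt_9 (δ : ℝ) (hδ0 : 0 < δ) (hδ1 : δ < 1) :
    ∃ C : ℝ, 0 < C ∧ ∀ (n : ℕ), 2 ≤ n → ∀ m : ℝ,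
      2 * (n : ℝ) ^ ((2 : ℝ) - δ / 2) < m → m ≤ (n : ℝ) ^ 2 →
      ∀ K : ℝ, K = (⌊δ * Real.logb 2 n / Real.logb 2 (2 * (n : ℝ) ^ 2 / m)⌋₊ : ℝ) →
      0 < K →
      ∀ ki : ℕ → ℝ, (∀ i, 1 ≤ i → 0 < ki i) →
        (∀ i, 1 ≤ i → 1 / (2 * ki i) ≤ 1 / K + (i : ℝ) / (δ * Real.logb 2 n)) →
      ∀ added : ℕ → ℝ, (∀ i, 1 ≤ i → 0 ≤ added i) →
        (∀ i, 1 ≤ i →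
          added i ≤ (1 / ki i + 1 / (n : ℝ) ^ ((1 : ℝ) - δ)) * (2 * m / 2 ^ i)) →
      ∑' i : ℕ, added (i + 1) ≤
        C * (m / K + m / Real.logb 2 n + m / (n : ℝ) ^ ((1 : ℝ) - δ)) := by
  refine ⟨8 / δ, by positivity, ?_⟩
  intro n hn m hm1 hm2 K hK hK0 ki hki hkib added hadd0 haddb
  set L := Real.logb 2 n with hL
  have hn1 : (1 : ℝ) < n := by exact_mod_cast lt_of_lt_of_le one_lt_two hn
  have hL0 : 0 < L := Real.logb_pos one_lt_two hn1
  have hm0 : 0 < m := lt_trans (by positivity) hm1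
  have hN : 0 < (n : ℝ) ^ ((1 : ℝ) - δ) := by positivity
  set N := (n : ℝ) ^ ((1 : ℝ) - δ) with hNdef
  set c1 : ℝ := (2 / K + 1 / N) * m with hc1
  set c2 : ℝ := (2 / (δ * L)) * m with hc2
  have hc10 : 0 ≤ c1 := by positivity
  have hc20 : 0 ≤ c2 := by positivity
  set g : ℕ → ℝ := fun i => c1 * (1 / 2 : ℝ) ^ i + c2 * (((i : ℝ) + 1) * (1 / 2 : ℝ) ^ i)
    with hg
  -- pointwise bound
  have hbound : ∀ i : ℕ, added (i + 1) ≤ g i := by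
    intro i
    have h1 : 1 ≤ i + 1 := Nat.le_add_left 1 i
    have hki0 := hki (i + 1) h1
    have hkib' := hkib (i + 1) h1
    have hinv : 1 / ki (i + 1) ≤ 2 / K + 2 * ((i : ℝ) + 1) / (δ * L) := by
      have he : 1 / (2 * ki (i + 1)) = (1 / ki (i + 1)) / 2 := by ring
      rw [he] at hkib'
      push_cast at hkib'
      have he2 : 2 / K + 2 * ((i : ℝ) + 1) / (δ * L)
          = 2 * (1 / K + ((i : ℝ) + 1) / (δ * L)) := by ring
      rw [he2]
      linarith
    have hb := haddb (i + 1) h1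
    have hpow : (2 * m / 2 ^ (i + 1)) = m * (1 / 2 : ℝ) ^ i := by
      rw [pow_succ]
      field_simp
      rw [← mul_pow]; norm_num
    rw [hpow] at hb
    have hmono : (1 / ki (i + 1) + 1 / N) ≤ (2 / K + 2 * ((i : ℝ) + 1) / (δ * L) + 1 / N) := by
      linarith
    have hmp : (0 : ℝ) ≤ m * (1 / 2 : ℝ) ^ i := by positivity
    have hfac : (1 / ki (i + 1) + 1 / N) * (m * (1 / 2 : ℝ) ^ i) ≤ g i := by
      calc (1 / ki (i + 1) + 1 / N) * (m * (1 / 2 : ℝ) ^ i)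
          ≤ (2 / K + 2 * ((i : ℝ) + 1) / (δ * L) + 1 / N) * (m * (1 / 2 : ℝ) ^ i) :=
            mul_le_mul_of_nonneg_right hmono hmp
        _ = g i := by simp only [hg, hc1, hc2]; ring
    exact hb.trans hfac
  have hr : ‖(1 / 2 : ℝ)‖ < 1 := by rw [Real.norm_eq_abs, abs_of_pos] <;> norm_num
  have hs_geo : Summable (fun i : ℕ => (1 / 2 : ℝ) ^ i) :=
    summable_geometric_of_lt_one (by norm_num) (by norm_num)
  have hs_mul : Summable (fun i : ℕ => (i : ℝ) * (1 / 2 : ℝ) ^ i) := by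
    have h2 := summable_pow_mul_geometric_of_norm_lt_one (R := ℝ) 1 hr
    simpa using h2
  have hs_mul1 : Summable (fun i : ℕ => ((i : ℝ) + 1) * (1 / 2 : ℝ) ^ i) := by
    have h3 := hs_mul.add hs_geo
    convert h3 using 2 with i
    ring
  have hsg : Summable g := ((hs_geo.mul_left c1).add ((hs_mul1).mul_left c2))
  have hsa : Summable (fun i : ℕ => added (i + 1)) :=
    Summable.of_nonneg_of_le (fun i => hadd0 (i + 1) (Nat.le_add_left 1 i)) hbound hsg
  have htsum_geo : ∑' i : ℕ, (1 / 2 : ℝ) ^ i = 2 := by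
    rw [tsum_geometric_of_lt_one (by norm_num) (by norm_num)]; norm_num
  have htsum_mul : ∑' i : ℕ, (i : ℝ) * (1 / 2 : ℝ) ^ i = 2 := by
    rw [tsum_coe_mul_geometric_of_norm_lt_one hr]; norm_num
  have htsum_mul1 : ∑' i : ℕ, ((i : ℝ) + 1) * (1 / 2 : ℝ) ^ i = 4 := by
    have h4 : ∑' i : ℕ, ((i : ℝ) + 1) * (1 / 2 : ℝ) ^ i
        = ∑' i : ℕ, ((i : ℝ) * (1 / 2 : ℝ) ^ i + (1 / 2 : ℝ) ^ i) := by
      congr 1 with i; ring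
    rw [h4, Summable.tsum_add hs_mul hs_geo, htsum_mul, htsum_geo]; norm_num
  have htsum_g : ∑' i : ℕ, g i = c1 * 2 + c2 * 4 := by
    rw [hg]
    rw [Summable.tsum_add (hs_geo.mul_left c1) (hs_mul1.mul_left c2),
      tsum_mul_left, tsum_mul_left, htsum_geo, htsum_mul1]
  have hle : ∑' i : ℕ, added (i + 1) ≤ c1 * 2 + c2 * 4 := by
    rw [← htsum_g]
    exact Summable.tsum_le_tsum hbound hsa hsg
  refine hle.trans ?_
  rw [hc1, hc2]
  have h1 : (2 / K + 1 / N) * m * 2 = 4 * (m / K) + 2 * (m / N) := by ring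
  have h2 : (2 / (δ * L)) * m * 4 = (8 / δ) * (m / L) := by
    field_simp
    ring
  rw [h1, h2, mul_add, mul_add]
  have t1 : 4 * (m / K) ≤ 8 / δ * (m / K) := by
    apply mul_le_mul_of_nonneg_right _ (by positivity)
    rw [le_div_iff₀ hδ0]; nlinarith
  have t2 : 2 * (m / N) ≤ 8 / δ * (m / N) := by
    apply mul_le_mul_of_nonneg_right _ (by positivity)
    rw [le_div_iff₀ hδ0]; nlinarith
  linarith
end
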